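/- (Raabe-type multiplication formula, order one.) Let m ≥ 1 be an integer. For every n ≥ 0 and every real x: Y_{n,β}(mx;k,a,b) = m^{n−k}·a^{b(m−1)}·∑_{j=0}^{m−1} (β^b/a^b)^j·Ỹ_n(x + j/m), where m^{n−k} := m^n/m^k and (Ỹ_n)_{n≥0} is the family of polynomials attached to the parameters (β^m, a^m), i.e., the polynomials satisfying ((β^b)^m·e^t − (a^b)^m)·∑_{n≥0} Ỹ_n(x)·tⁿ/n! = 2^{1−k}·t^k·e^{xt} as formal power series in t. -/

import Mathlib

open Polynomial

/-- The exponential generating series `e^{xt} = ∑_{n≥0} xⁿ tⁿ/n!` as a formal power series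
in `t` with coefficients in `ℂ[x]`. -/
noncomputable def expX : PowerSeries (Polynomial ℂ) :=
  PowerSeries.mk fun n => (n.factorial : ℂ)⁻¹ • (Polynomial.X : Polynomial ℂ) ^ n

/-- The exponential generating series `∑_{n≥0} Y_n tⁿ/n!` of a family of polynomials. -/
noncomputable def egf (Y : ℕ → Polynomial ℂ) : PowerSeries (Polynomial ℂ) :=
  PowerSeries.mk fun n => (n.factorial : ℂ)⁻¹ • Y n

/-- The defining identity for the unified Apostol-type polynomials with general constants:
`(B·e^t − A)^v · ∑_{n≥0} Y_n tⁿ/n! = (2^{1−k} t^k)^v · e^{xt}` as formal power series in `t`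
over `ℂ[x]`. -/
def ApostolFamilyC (k v : ℕ) (B A : ℂ) (Y : ℕ → Polynomial ℂ) : Prop :=
  (PowerSeries.C (R := Polynomial ℂ) (Polynomial.C B) * PowerSeries.exp (Polynomial ℂ)
      - PowerSeries.C (R := Polynomial ℂ) (Polynomial.C A)) ^ v * egf Y
    = (PowerSeries.C (R := Polynomial ℂ) (Polynomial.C ((2 : ℂ) ^ ((1 : ℤ) - (k : ℤ)))) *
        PowerSeries.X ^ k) ^ v * expX

/-- `Y` is the family of unified Apostol-type polynomials `Y_{n,β}^{(v)}(x;k,a,b)`: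
here `β^b = exp(b·Log β)` is the principal complex power and `a^b` the real power. -/
def ApostolFamily (k v : ℕ) (a b : ℝ) (β : ℂ) (Y : ℕ → Polynomial ℂ) : Prop :=
  ApostolFamilyC k v (β ^ (b : ℂ)) (((a ^ b : ℝ) : ℂ)) Y

namespace ApostolAux

open PowerSeries

/-- Map a power series over ℂ[x] to one over ℂ by evaluating coefficients at z. -/
noncomputable def Φ (z : ℂ) : PowerSeries (Polynomial ℂ) →+* PowerSeries ℂ :=
  PowerSeries.map (Polynomial.evalRingHom z)

lemma Φ_C (z c : ℂ) : Φ z (PowerSeries.C (Polynomial.C c)) = PowerSeries.C (R := ℂ) c := by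
  simp [Φ]

lemma Φ_X (z : ℂ) : Φ z PowerSeries.X = PowerSeries.X := by
  simp [Φ]

lemma Φ_exp (z : ℂ) : Φ z (PowerSeries.exp (Polynomial ℂ)) = PowerSeries.exp ℂ := by
  simp [Φ]

lemma Φ_expX (z : ℂ) : Φ z expX = PowerSeries.rescale z (PowerSeries.exp ℂ) := by
  ext n
  simp [Φ, expX, PowerSeries.coeff_rescale, map_inv₀, mul_comm]

lemma coeff_Φ_egf (z : ℂ) (Y : ℕ → Polynomial ℂ) (n : ℕ) :
    PowerSeries.coeff (R := ℂ) n (Φ z (egf Y)) = (n.factorial : ℂ)⁻¹ * (Y n).eval z := by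
  simp [Φ, egf]

lemma rescale_C (c r : ℂ) :
    PowerSeries.rescale r (PowerSeries.C (R := ℂ) c) = PowerSeries.C (R := ℂ) c := by
  ext n
  cases n <;> simp [PowerSeries.coeff_rescale]

theorem main (k : ℕ) (B A : ℂ) (hA : A ≠ 0) (hB : B ≠ 0)
    (m : ℕ) (hm : 1 ≤ m)
    (Y Yt : ℕ → Polynomial ℂ)
    (hY : ApostolFamilyC k 1 B A Y)
    (hYt : ApostolFamilyC k 1 (B ^ m) (A ^ m) Yt)
    (n : ℕ) (x : ℂ) :
    (Y n).eval ((m : ℂ) * x)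
      = (m : ℂ) ^ n / (m : ℂ) ^ k * A ^ (m - 1) *
          ∑ j ∈ Finset.range m,
            (B / A) ^ j * (Yt n).eval (x + (j : ℂ) / (m : ℂ)) := by
  classical
  have hm0 : (m : ℂ) ≠ 0 := Nat.cast_ne_zero.mpr (by omega)
  set κ : ℂ := (2 : ℂ) ^ ((1 : ℤ) - (k : ℤ)) with hκ
  unfold ApostolFamilyC at hY hYt
  rw [pow_one, pow_one] at hY hYt
  set E : PowerSeries ℂ := PowerSeries.exp ℂ with hE
  set F : PowerSeries ℂ := Φ ((m:ℂ) * x) (egf Y) with hF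
  -- mapped hypothesis for Y
  have hYm : (PowerSeries.C (R := ℂ) B * E - PowerSeries.C (R := ℂ) A) * F
      = PowerSeries.C (R := ℂ) κ * PowerSeries.X ^ k * rescale ((m:ℂ) * x) E := by
    have := congrArg (Φ ((m:ℂ) * x)) hY
    simpa [map_mul, map_sub, Φ_C, Φ_X, Φ_exp, Φ_expX, map_pow] using this
  set G : ℕ → PowerSeries ℂ := fun j => Φ (x + (j:ℂ)/(m:ℂ)) (egf Yt) with hG
  have hYtm : ∀ j : ℕ,
      ((PowerSeries.C (R := ℂ) B) ^ m * E ^ m - (PowerSeries.C (R := ℂ) A) ^ m) * rescale (m:ℂ) (G j)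
        = PowerSeries.C (R := ℂ) (κ * (m:ℂ)^k) * PowerSeries.X ^ k *
            (rescale ((m:ℂ) * x) E * E ^ j) := by
    intro j
    have h1 := congrArg (Φ (x + (j:ℂ)/(m:ℂ))) hYt
    simp only [map_mul, map_sub, Φ_C, Φ_X, Φ_exp, Φ_expX, map_pow, ← hE] at h1
    have h2 := congrArg (rescale (m:ℂ)) h1
    simp only [map_mul, map_sub, map_pow, rescale_C, rescale_rescale, rescale_X] at h2
    have harg : (x + (j:ℂ)/(m:ℂ)) * (m:ℂ) = (m:ℂ) * x + (j:ℂ) := by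
      field_simp
    rw [harg] at h2
    rw [← PowerSeries.exp_pow_eq_rescale_exp, ← hE] at h2
    calc ((PowerSeries.C (R := ℂ) B) ^ m * E ^ m - (PowerSeries.C (R := ℂ) A) ^ m) * rescale (m:ℂ) (G j)
        = ((PowerSeries.C (R := ℂ) B) ^ m * E ^ m - (PowerSeries.C (R := ℂ) A) ^ m) * rescale (m:ℂ) (G j) := rfl
      _ = PowerSeries.C (R := ℂ) κ * (PowerSeries.C (R := ℂ) (m:ℂ) * PowerSeries.X) ^ k *
            rescale ((m:ℂ) * x + (j:ℂ)) E := h2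
      _ = PowerSeries.C (R := ℂ) (κ * (m:ℂ)^k) * PowerSeries.X ^ k *
            (rescale ((m:ℂ) * x) E * E ^ j) := by
          rw [hE, PowerSeries.exp_pow_eq_rescale_exp, PowerSeries.exp_mul_exp_eq_exp_add,
            mul_pow, ← map_pow, map_mul]
          ring
  -- the key factor
  set u : PowerSeries ℂ := PowerSeries.C (R := ℂ) B * E with hu
  set v : PowerSeries ℂ := PowerSeries.C (R := ℂ) A with hv
  have hfac : (∑ i ∈ Finset.range m, u ^ i * v ^ (m - 1 - i)) * (u - v) = u ^ m - v ^ m :=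
    geom_sum₂_mul u v m
  have hdiff : u ^ m - v ^ m = (PowerSeries.C (R := ℂ) B) ^ m * E ^ m - (PowerSeries.C (R := ℂ) A) ^ m := by
    rw [hu, hv, mul_pow]
  have hD : u ^ m - v ^ m ≠ 0 := by
    intro h
    have h1 := congrArg (PowerSeries.coeff (R := ℂ) 1) h
    rw [hdiff] at h1
    rw [hE, PowerSeries.exp_pow_eq_rescale_exp] at h1
    simp only [map_sub, ← map_pow, PowerSeries.coeff_C_mul, PowerSeries.coeff_rescale,
      PowerSeries.coeff_exp, PowerSeries.coeff_C] at h1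
    simp only [Nat.factorial_one, Nat.cast_one, pow_one, map_zero] at h1
    -- h1 : B^m * ((m:ℂ) * algebraMap ℚ ℂ (1/1)) - 0 = 0
    simp at h1
    rcases h1 with ⟨h1, _⟩ | h1
    · exact hB h1
    · omega
  -- the key identity
  have key : (u ^ m - v ^ m) * F
      = (u ^ m - v ^ m) *
          (PowerSeries.C (R := ℂ) (A ^ (m-1) / (m:ℂ)^k) *
            ∑ j ∈ Finset.range m, PowerSeries.C (R := ℂ) ((B/A)^j) * rescale (m:ℂ) (G j)) := by
    have lhs_eq : (u ^ m - v ^ m) * F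
        = (∑ i ∈ Finset.range m, u ^ i * v ^ (m - 1 - i)) *
            (PowerSeries.C (R := ℂ) κ * PowerSeries.X ^ k * rescale ((m:ℂ) * x) E) := by
      rw [← hfac, mul_assoc, hYm]
    rw [lhs_eq]
    rw [Finset.mul_sum, Finset.sum_mul, Finset.mul_sum]
    refine Finset.sum_congr rfl fun j hj => ?_
    have hjm : j ≤ m - 1 := by
      have := Finset.mem_range.mp hj; omega
    have hterm : (u ^ m - v ^ m) * rescale (m:ℂ) (G j)
        = PowerSeries.C (R := ℂ) (κ * (m:ℂ)^k) * PowerSeries.X ^ k *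
            (rescale ((m:ℂ) * x) E * E ^ j) := by
      rw [hdiff]; exact hYtm j
    have hscal : A ^ (m-1) / (m:ℂ)^k * ((B/A)^j * (κ * (m:ℂ)^k)) = B ^ j * A ^ (m-1-j) * κ := by
      have hAm : A ^ (m-1) = A ^ (m-1-j) * A ^ j := by
        rw [← pow_add]; congr 1; omega
      rw [hAm, div_pow]
      field_simp
    calc u ^ j * v ^ (m - 1 - j) * (PowerSeries.C (R := ℂ) κ * PowerSeries.X ^ k * rescale ((m:ℂ) * x) E)
        = PowerSeries.C (R := ℂ) (B ^ j * A ^ (m-1-j) * κ) * PowerSeries.X ^ k *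
            (rescale ((m:ℂ) * x) E * E ^ j) := by
          rw [hu, hv, mul_pow, map_mul, map_mul, map_pow, map_pow]
          ring
      _ = PowerSeries.C (R := ℂ) (A ^ (m-1) / (m:ℂ)^k) *
            (PowerSeries.C (R := ℂ) ((B/A)^j) * ((u ^ m - v ^ m) * rescale (m:ℂ) (G j))) := by
          rw [hterm, ← hscal, map_mul, map_mul]
          ring
      _ = PowerSeries.C (R := ℂ) (A ^ (m-1) / (m:ℂ)^k) *
            (PowerSeries.C (R := ℂ) ((B/A)^j) * rescale (m:ℂ) (G j)) * (u ^ m - v ^ m) := by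
          ring
      _ = (u ^ m - v ^ m) * (PowerSeries.C (R := ℂ) (A ^ (m-1) / (m:ℂ)^k) *
            (PowerSeries.C (R := ℂ) ((B/A)^j) * rescale (m:ℂ) (G j))) := by ring
  have keyF : F = PowerSeries.C (R := ℂ) (A ^ (m-1) / (m:ℂ)^k) *
      ∑ j ∈ Finset.range m, PowerSeries.C (R := ℂ) ((B/A)^j) * rescale (m:ℂ) (G j) :=
    mul_left_cancel₀ hD key
  -- take coefficients
  have hcoeff := congrArg (PowerSeries.coeff (R := ℂ) n) keyF
  rw [hF, coeff_Φ_egf] at hcoeff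
  rw [PowerSeries.coeff_C_mul, map_sum] at hcoeff
  simp only [PowerSeries.coeff_C_mul, PowerSeries.coeff_rescale, hG, coeff_Φ_egf] at hcoeff
  -- hcoeff : (n!)⁻¹ * (Y n).eval (m x)
  --   = A^{m-1}/m^k * ∑ j, (B/A)^j * (m^n * ((n!)⁻¹ * (Yt n).eval (x + j/m)))
  have hfacn : ((n.factorial : ℂ)) ≠ 0 := Nat.cast_ne_zero.mpr n.factorial_ne_zero
  have h2 : (Y n).eval ((m:ℂ) * x)
      = (n.factorial : ℂ) * ((n.factorial : ℂ)⁻¹ * (Y n).eval ((m:ℂ) * x)) := by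
    field_simp
  rw [h2, hcoeff, Finset.mul_sum, Finset.mul_sum, Finset.mul_sum]
  refine Finset.sum_congr rfl fun j hj => ?_
  field_simp

end ApostolAux

theorem apostol_multiplication (k : ℕ) (a b : ℝ) (β : ℂ)
    (ha : 0 < a) (hb : 0 < b) (hβ : β ≠ 0)
    (m : ℕ) (hm : 1 ≤ m)
    (Y Yt : ℕ → Polynomial ℂ)
    (hY : ApostolFamily k 1 a b β Y)
    (hYt : ApostolFamilyC k 1 ((β ^ (b : ℂ)) ^ m) ((((a ^ b : ℝ) : ℂ)) ^ m) Yt)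
    (n : ℕ) (x : ℝ) :
    (Y n).eval ((m : ℂ) * (x : ℂ))
      = (m : ℂ) ^ n / (m : ℂ) ^ k * ((a ^ b : ℝ) : ℂ) ^ (m - 1) *
          ∑ j ∈ Finset.range m,
            (β ^ (b : ℂ) / ((a ^ b : ℝ) : ℂ)) ^ j *
              (Yt n).eval ((x : ℂ) + (j : ℂ) / (m : ℂ)) := by
  have hA : (((a ^ b : ℝ) : ℂ)) ≠ 0 := by
    have : (0:ℝ) < a ^ b := Real.rpow_pos_of_pos ha b
    exact_mod_cast this.ne'
  have hB : β ^ (b : ℂ) ≠ 0 := by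
    rw [Ne, Complex.cpow_eq_zero_iff]
    simp [hβ]
  exact ApostolAux.main k (β ^ (b : ℂ)) (((a ^ b : ℝ) : ℂ)) hA hB m hm Y Yt hY hYt n x
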